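/- Lean-support equivalence is a congruence for composition of binding bigraphs: if G₁ is lean-support equivalent to G₁' and G₂ to G₂', then G₂ ∘ G₁ is lean-support equivalent to G₂' ∘ G₁' (whenever the composites are defined). -/

import Mathlib

/-!
STATEMENT 7: lean-support equivalence (isomorphism of nodes and of non-idle
edges preserving control, parent and link structure) is a congruence for
composition of binding bigraphs.
-/

namespace Bigraphs

/-- A binding bigraph `(n, X, locX) → (m, Y, locY)` over a set `K` of controls. -/
structure Bigraph (K : Type*) (n m : ℕ) (X Y : Type*) where
  V : Type
  E : Type
  PB : Type
  PF : Type
  ctrl : V → K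
  nodeB : PB → V
  nodeF : PF → V
  locX : X → Option (Fin n)
  locY : Y → Option (Fin m)
  prnt : Sum (Fin n) V → Sum V (Fin m)
  link : Sum (Sum PB PF) X → Sum E Y

variable {K : Type*} {n m k : ℕ} {X Y Z : Type*}

abbrev Bigraph.Point (G : Bigraph K n m X Y) := Sum (Sum G.PB G.PF) X

def compPrnt {V V' : Type*} (prnt : Sum (Fin n) V → Sum V (Fin m))
    (prnt' : Sum (Fin m) V' → Sum V' (Fin k)) :
    Sum (Fin n) (Sum V V') → Sum (Sum V V') (Fin k)
  | .inl i =>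
      match prnt (.inl i) with
      | .inl v => .inl (.inl v)
      | .inr j =>
          match prnt' (.inl j) with
          | .inl v' => .inl (.inr v')
          | .inr r => .inr r
  | .inr (.inl v) =>
      match prnt (.inr v) with
      | .inl w => .inl (.inl w)
      | .inr j =>
          match prnt' (.inl j) with
          | .inl v' => .inl (.inr v')
          | .inr r => .inr r
  | .inr (.inr v') =>
      match prnt' (.inr v') with
      | .inl w' => .inl (.inr w')
      | .inr r => .inr r

def pushSnd (G : Bigraph K n m X Y) (H : Bigraph K m k Y Z) :
    Sum H.E Z → Sum (Sum G.E H.E) Z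
  | .inl e => .inl (.inr e)
  | .inr z => .inr z

def chase (G : Bigraph K n m X Y) (H : Bigraph K m k Y Z) :
    Sum G.E Y → Sum (Sum G.E H.E) Z
  | .inl e => .inl (.inl e)
  | .inr y => pushSnd G H (H.link (.inr y))

/-- Composition of binding bigraphs. -/
def comp (G : Bigraph K n m X Y) (H : Bigraph K m k Y Z) : Bigraph K n k X Z where
  V := Sum G.V H.V
  E := Sum G.E H.E
  PB := Sum G.PB H.PB
  PF := Sum G.PF H.PF
  ctrl := Sum.elim G.ctrl H.ctrl
  nodeB := Sum.map G.nodeB H.nodeB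
  nodeF := Sum.map G.nodeF H.nodeF
  locX := G.locX
  locY := H.locY
  prnt := compPrnt G.prnt H.prnt
  link := fun p =>
    match p with
    | .inl (.inl (.inl p)) => chase G H (G.link (.inl (.inl p)))
    | .inl (.inl (.inr p)) => pushSnd G H (H.link (.inl (.inl p)))
    | .inl (.inr (.inl p)) => chase G H (G.link (.inl (.inr p)))
    | .inl (.inr (.inr p)) => pushSnd G H (H.link (.inl (.inr p)))
    | .inr x => chase G H (G.link (.inr x))

/-- Lean-support equivalence: after discarding idle edges, a bijection of nodes
and ports and a bijection of (non-idle) edges preserving control, parent and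
link structure. -/
def LeanEquiv (G G' : Bigraph K n m X Y) : Prop :=
  ∃ (φV : G.V ≃ G'.V) (φB : G.PB ≃ G'.PB) (φF : G.PF ≃ G'.PF)
    (φE : {e : G.E // ∃ q : G.Point, G.link q = .inl e} ≃
          {e' : G'.E // ∃ q : G'.Point, G'.link q = .inl e'}),
    (∀ v, G'.ctrl (φV v) = G.ctrl v) ∧
    (∀ p, G'.nodeB (φB p) = φV (G.nodeB p)) ∧
    (∀ p, G'.nodeF (φF p) = φV (G.nodeF p)) ∧
    (∀ a, G'.prnt (Sum.map id φV a) = Sum.map φV id (G.prnt a)) ∧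
    (∀ p : G.Point,
      (∀ y : Y, G.link p = .inr y →
        G'.link (Sum.map (Sum.map φB φF) id p) = .inr y) ∧
      (∀ e, (he : G.link p = .inl e) →
        G'.link (Sum.map (Sum.map φB φF) id p) = .inl (φE ⟨e, p, he⟩).1))

/-! ### Auxiliary development -/

section Aux

variable (G₁ : Bigraph K n m X Y) (G₂ : Bigraph K m k Y Z)

/-- Embed a point of `G₁` as a point of the composite. -/
def emb1 : G₁.Point → (comp G₁ G₂).Point
  | .inl (.inl p) => .inl (.inl (.inl p))
  | .inl (.inr p) => .inl (.inr (.inl p))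
  | .inr x => .inr x

/-- Embed a port of `G₂` as a point of the composite. -/
def emb2 : Sum G₂.PB G₂.PF → (comp G₁ G₂).Point
  | .inl p => .inl (.inl (.inr p))
  | .inr p => .inl (.inr (.inr p))

lemma link_emb1 (p : G₁.Point) :
    (comp G₁ G₂).link (emb1 G₁ G₂ p) = chase G₁ G₂ (G₁.link p) := by
  rcases p with (p | p) | x <;> rfl

lemma link_emb2 (p : Sum G₂.PB G₂.PF) :
    (comp G₁ G₂).link (emb2 G₁ G₂ p) = pushSnd G₁ G₂ (G₂.link (.inl p)) := by
  rcases p with p | p <;> rfl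

lemma point_cases (q : (comp G₁ G₂).Point) :
    (∃ p, q = emb1 G₁ G₂ p) ∨ (∃ p, q = emb2 G₁ G₂ p) := by
  rcases q with ((p | p) | (p | p)) | x
  · exact .inl ⟨.inl (.inl p), rfl⟩
  · exact .inr ⟨.inl p, rfl⟩
  · exact .inl ⟨.inl (.inr p), rfl⟩
  · exact .inr ⟨.inr p, rfl⟩
  · exact .inl ⟨.inr x, rfl⟩

lemma nonidle_inl (e₁ : G₁.E) :
    (∃ q : (comp G₁ G₂).Point, (comp G₁ G₂).link q = .inl (.inl e₁)) ↔
      ∃ p : G₁.Point, G₁.link p = .inl e₁ := by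
  constructor
  · rintro ⟨q, hq⟩
    rcases point_cases G₁ G₂ q with ⟨p, rfl⟩ | ⟨p, rfl⟩
    · rw [link_emb1] at hq
      rcases h : G₁.link p with e | y
      · rw [h] at hq
        simp only [chase, Sum.inl.injEq] at hq
        exact ⟨p, by rw [h, Sum.inl.inj (Sum.inl.inj hq)]⟩
      · rw [h] at hq
        rcases h2 : G₂.link (.inr y) with e | z <;>
          simp [chase, pushSnd, h2] at hq <;> cases hq
    · rw [link_emb2] at hq
      rcases h2 : G₂.link (.inl p) with e | z <;>
        simp [pushSnd, h2] at hq <;> cases hq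
  · rintro ⟨p, hp⟩
    exact ⟨emb1 G₁ G₂ p, by rw [link_emb1, hp]; rfl⟩

lemma nonidle_inr (e₂ : G₂.E) :
    (∃ q : (comp G₁ G₂).Point, (comp G₁ G₂).link q = .inl (.inr e₂)) ↔
      (∃ p : Sum G₂.PB G₂.PF, G₂.link (.inl p) = .inl e₂) ∨
        (∃ (p : G₁.Point) (y : Y), G₁.link p = .inr y ∧ G₂.link (.inr y) = .inl e₂) := by
  constructor
  · rintro ⟨q, hq⟩
    rcases point_cases G₁ G₂ q with ⟨p, rfl⟩ | ⟨p, rfl⟩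
    · rw [link_emb1] at hq
      rcases h : G₁.link p with e | y
      · rw [h] at hq; simp [chase] at hq; cases hq
      · rw [h] at hq
        rcases h2 : G₂.link (.inr y) with e | z <;>
          simp only [chase, pushSnd, h2, Sum.inl.injEq, Sum.inr.injEq, reduceCtorEq] at hq
        exact .inr ⟨p, y, h, by rw [h2, Sum.inr.inj (Sum.inl.inj hq)]⟩
    · rw [link_emb2] at hq
      rcases h2 : G₂.link (.inl p) with e | z <;>
        simp only [pushSnd, h2, Sum.inl.injEq, Sum.inr.injEq, reduceCtorEq] at hq
      exact .inl ⟨p, by rw [h2, Sum.inr.inj (Sum.inl.inj hq)]⟩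
  · rintro (⟨p, hp⟩ | ⟨p, y, hpy, hy⟩)
    · exact ⟨emb2 G₁ G₂ p, by rw [link_emb2, hp]; rfl⟩
    · exact ⟨emb1 G₁ G₂ p, by rw [link_emb1, hpy]; simp [chase, pushSnd, hy]; rfl⟩

lemma nonidle_inr_G₂ (e₂ : G₂.E)
    (h : ∃ q : (comp G₁ G₂).Point, (comp G₁ G₂).link q = .inl (.inr e₂)) :
    ∃ p : G₂.Point, G₂.link p = .inl e₂ := by
  rcases (nonidle_inr G₁ G₂ e₂).mp h with ⟨p, hp⟩ | ⟨p, y, _, hy⟩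
  · exact ⟨.inl p, hp⟩
  · exact ⟨.inr y, hy⟩

end Aux

section Inv

variable {G G' : Bigraph K n m X Y}

/-- The link-preservation clause can be inverted. -/
lemma linkInv (φB : G.PB ≃ G'.PB) (φF : G.PF ≃ G'.PF)
    (φE : {e : G.E // ∃ q : G.Point, G.link q = .inl e} ≃
          {e' : G'.E // ∃ q : G'.Point, G'.link q = .inl e'})
    (l : ∀ p : G.Point,
      (∀ y : Y, G.link p = .inr y →
        G'.link (Sum.map (Sum.map φB φF) id p) = .inr y) ∧
      (∀ e, (he : G.link p = .inl e) →
        G'.link (Sum.map (Sum.map φB φF) id p) = .inl (φE ⟨e, p, he⟩).1)) :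
    ∀ p' : G'.Point,
      (∀ y : Y, G'.link p' = .inr y →
        G.link (Sum.map (Sum.map φB.symm φF.symm) id p') = .inr y) ∧
      (∀ e', (he' : G'.link p' = .inl e') →
        G.link (Sum.map (Sum.map φB.symm φF.symm) id p') = .inl (φE.symm ⟨e', p', he'⟩).1) := by
  intro p'
  set p : G.Point := Sum.map (Sum.map φB.symm φF.symm) id p' with hpdef
  have hmap : Sum.map (Sum.map (⇑φB) (⇑φF)) id p = p' := by
    rcases p' with (b | f) | x <;> simp [hpdef, Sum.map]
  rcases hl : G.link p with e | y
  · have hl' := (l p).2 e hl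
    rw [hmap] at hl'
    constructor
    · intro y hy; rw [hl'] at hy; cases hy
    · intro e' he'
      have hval : (φE ⟨e, p, hl⟩).1 = e' := Sum.inl.inj (hl'.symm.trans he')
      have hEq : φE ⟨e, p, hl⟩ = ⟨e', p', he'⟩ := Subtype.ext hval
      have h7 : φE.symm ⟨e', p', he'⟩ = ⟨e, p, hl⟩ :=
        (congrArg φE.symm hEq.symm).trans (Equiv.symm_apply_apply _ _)
      exact congrArg Sum.inl (congrArg Subtype.val h7).symm
  · have hl' := (l p).1 y hl
    rw [hmap] at hl'
    constructor
    · intro y' hy'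
      obtain rfl : y = y' := Sum.inr.inj (hl'.symm.trans hy')
      rfl
    · intro e' he'
      exact absurd (hl'.symm.trans he') (by simp)

end Inv

section Fwd

variable {G₁ G₁' : Bigraph K n m X Y} {G₂ G₂' : Bigraph K m k Y Z}

/-- Forward map on non-idle edges of a composite. -/
def edgeFwd (φB1 : G₁.PB ≃ G₁'.PB) (φF1 : G₁.PF ≃ G₁'.PF)
    (φB2 : G₂.PB ≃ G₂'.PB) (φF2 : G₂.PF ≃ G₂'.PF)
    (φE1 : {e : G₁.E // ∃ q : G₁.Point, G₁.link q = .inl e} ≃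
           {e' : G₁'.E // ∃ q : G₁'.Point, G₁'.link q = .inl e'})
    (φE2 : {e : G₂.E // ∃ q : G₂.Point, G₂.link q = .inl e} ≃
           {e' : G₂'.E // ∃ q : G₂'.Point, G₂'.link q = .inl e'})
    (l1 : ∀ p : G₁.Point,
      (∀ y : Y, G₁.link p = .inr y →
        G₁'.link (Sum.map (Sum.map φB1 φF1) id p) = .inr y) ∧
      (∀ e, (he : G₁.link p = .inl e) →
        G₁'.link (Sum.map (Sum.map φB1 φF1) id p) = .inl (φE1 ⟨e, p, he⟩).1))
    (l2 : ∀ p : G₂.Point,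
      (∀ y : Z, G₂.link p = .inr y →
        G₂'.link (Sum.map (Sum.map φB2 φF2) id p) = .inr y) ∧
      (∀ e, (he : G₂.link p = .inl e) →
        G₂'.link (Sum.map (Sum.map φB2 φF2) id p) = .inl (φE2 ⟨e, p, he⟩).1)) :
    {e : (comp G₁ G₂).E // ∃ q : (comp G₁ G₂).Point, (comp G₁ G₂).link q = .inl e} →
    {e' : (comp G₁' G₂').E // ∃ q : (comp G₁' G₂').Point, (comp G₁' G₂').link q = .inl e'} :=
  fun x =>
    match x with
    | ⟨.inl e₁, h⟩ =>
        ⟨.inl (φE1 ⟨e₁, (nonidle_inl G₁ G₂ e₁).mp h⟩).1, by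
          obtain ⟨p, hp⟩ := (nonidle_inl G₁ G₂ e₁).mp h
          exact (nonidle_inl G₁' G₂' _).mpr
            ⟨Sum.map (Sum.map φB1 φF1) id p, (l1 p).2 e₁ hp⟩⟩
    | ⟨.inr e₂, h⟩ =>
        ⟨.inr (φE2 ⟨e₂, nonidle_inr_G₂ G₁ G₂ e₂ h⟩).1, by
          rcases (nonidle_inr G₁ G₂ e₂).mp h with ⟨p, hp⟩ | ⟨p, y, hpy, hy⟩
          · exact (nonidle_inr G₁' G₂' _).mpr
              (.inl ⟨Sum.map φB2 φF2 p, (l2 (.inl p)).2 e₂ hp⟩)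
          · exact (nonidle_inr G₁' G₂' _).mpr
              (.inr ⟨Sum.map (Sum.map φB1 φF1) id p, y, (l1 p).1 y hpy,
                (l2 (.inr y)).2 e₂ hy⟩)⟩

lemma edgeFwd_inl (φB1 : G₁.PB ≃ G₁'.PB) (φF1 : G₁.PF ≃ G₁'.PF)
    (φB2 : G₂.PB ≃ G₂'.PB) (φF2 : G₂.PF ≃ G₂'.PF) (φE1) (φE2) (l1) (l2)
    (e₁ : G₁.E) (h) (hg : ∃ p : G₁.Point, G₁.link p = .inl e₁) :
    (edgeFwd φB1 φF1 φB2 φF2 φE1 φE2 l1 l2 ⟨.inl e₁, h⟩).1 = .inl (φE1 ⟨e₁, hg⟩).1 :=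
  rfl

lemma edgeFwd_inr (φB1 : G₁.PB ≃ G₁'.PB) (φF1 : G₁.PF ≃ G₁'.PF)
    (φB2 : G₂.PB ≃ G₂'.PB) (φF2 : G₂.PF ≃ G₂'.PF) (φE1) (φE2) (l1) (l2)
    (e₂ : G₂.E) (h) (hg : ∃ p : G₂.Point, G₂.link p = .inl e₂) :
    (edgeFwd φB1 φF1 φB2 φF2 φE1 φE2 l1 l2 ⟨.inr e₂, h⟩).1 = .inr (φE2 ⟨e₂, hg⟩).1 :=
  rfl

end Fwd

/-- Lean-support equivalence is a congruence for composition of binding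
bigraphs. -/
theorem leanEquiv_comp (G₁ G₁' : Bigraph K n m X Y) (G₂ G₂' : Bigraph K m k Y Z)
    (h₁ : LeanEquiv G₁ G₁') (h₂ : LeanEquiv G₂ G₂') :
    LeanEquiv (comp G₁ G₂) (comp G₁' G₂') := by
  obtain ⟨φV1, φB1, φF1, φE1, c1, nb1, nf1, pr1, l1⟩ := h₁
  obtain ⟨φV2, φB2, φF2, φE2, c2, nb2, nf2, pr2, l2⟩ := h₂
  have l1' := linkInv φB1 φF1 φE1 l1
  have l2' := linkInv φB2 φF2 φE2 l2
  -- the edge bijection on non-idle edges of the composite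
  have key1 : ∀ (a : {e : G₁.E // ∃ q : G₁.Point, G₁.link q = .inl e}) h',
      φE1.symm ⟨(φE1 a).1, h'⟩ = a := by
    intro a h'
    rw [show (⟨(φE1 a).1, h'⟩ : {e' : G₁'.E // ∃ q : G₁'.Point, G₁'.link q = .inl e'})
        = φE1 a from rfl, Equiv.symm_apply_apply]
  have key1' : ∀ (a : {e' : G₁'.E // ∃ q : G₁'.Point, G₁'.link q = .inl e'}) h',
      φE1 ⟨(φE1.symm a).1, h'⟩ = a := by
    intro a h'
    rw [show (⟨(φE1.symm a).1, h'⟩ : {e : G₁.E // ∃ q : G₁.Point, G₁.link q = .inl e})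
        = φE1.symm a from rfl, Equiv.apply_symm_apply]
  have key2 : ∀ (a : {e : G₂.E // ∃ q : G₂.Point, G₂.link q = .inl e}) h',
      φE2.symm ⟨(φE2 a).1, h'⟩ = a := by
    intro a h'
    rw [show (⟨(φE2 a).1, h'⟩ : {e' : G₂'.E // ∃ q : G₂'.Point, G₂'.link q = .inl e'})
        = φE2 a from rfl, Equiv.symm_apply_apply]
  have key2' : ∀ (a : {e' : G₂'.E // ∃ q : G₂'.Point, G₂'.link q = .inl e'}) h',
      φE2 ⟨(φE2.symm a).1, h'⟩ = a := by
    intro a h'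
    rw [show (⟨(φE2.symm a).1, h'⟩ : {e : G₂.E // ∃ q : G₂.Point, G₂.link q = .inl e})
        = φE2.symm a from rfl, Equiv.apply_symm_apply]
  refine ⟨φV1.sumCongr φV2, φB1.sumCongr φB2, φF1.sumCongr φF2,
    ⟨edgeFwd φB1 φF1 φB2 φF2 φE1 φE2 l1 l2,
     edgeFwd φB1.symm φF1.symm φB2.symm φF2.symm φE1.symm φE2.symm l1' l2',
     ?_, ?_⟩, ?_, ?_, ?_, ?_, ?_⟩
  · -- left inverse
    rintro ⟨e | e, h⟩ <;> apply Subtype.ext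
    · exact congrArg Sum.inl (congrArg Subtype.val
        (key1 ⟨e, (nonidle_inl G₁ G₂ e).mp h⟩ (φE1 ⟨e, (nonidle_inl G₁ G₂ e).mp h⟩).2))
    · exact congrArg Sum.inr (congrArg Subtype.val
        (key2 ⟨e, nonidle_inr_G₂ G₁ G₂ e h⟩ (φE2 ⟨e, nonidle_inr_G₂ G₁ G₂ e h⟩).2))
  · -- right inverse
    rintro ⟨e | e, h⟩ <;> apply Subtype.ext
    · exact congrArg Sum.inl (congrArg Subtype.val
        (key1' ⟨e, (nonidle_inl G₁' G₂' e).mp h⟩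
          (φE1.symm ⟨e, (nonidle_inl G₁' G₂' e).mp h⟩).2))
    · exact congrArg Sum.inr (congrArg Subtype.val
        (key2' ⟨e, nonidle_inr_G₂ G₁' G₂' e h⟩
          (φE2.symm ⟨e, nonidle_inr_G₂ G₁' G₂' e h⟩).2))
  · -- ctrl
    rintro (v | v)
    · exact c1 v
    · exact c2 v
  · -- nodeB
    rintro (p | p)
    · exact congrArg Sum.inl (nb1 p)
    · exact congrArg Sum.inr (nb2 p)
  · -- nodeF
    rintro (p | p)
    · exact congrArg Sum.inl (nf1 p)
    · exact congrArg Sum.inr (nf2 p)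
  · -- prnt
    show ∀ a : Sum (Fin n) (Sum G₁.V G₂.V), compPrnt G₁'.prnt G₂'.prnt (Sum.map id (φV1.sumCongr φV2) a)
      = Sum.map (φV1.sumCongr φV2) id (compPrnt G₁.prnt G₂.prnt a)
    rintro (i | (v | v))
    · have h1 := pr1 (.inl i)
      rw [show (Sum.map id (⇑φV1) (.inl i) : Sum (Fin n) G₁'.V) = .inl i from rfl] at h1
      rcases hp : G₁.prnt (.inl i) with w | j
      · rw [hp] at h1
        simp [comp, compPrnt, hp, h1, Equiv.sumCongr_apply]
      · rw [hp] at h1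
        have h2 := pr2 (.inl j)
        rw [show (Sum.map id (⇑φV2) (.inl j) : Sum (Fin m) G₂'.V) = .inl j from rfl] at h2
        rcases hq : G₂.prnt (.inl j) with w' | r <;> rw [hq] at h2 <;>
          simp [comp, compPrnt, hp, hq, h1, h2, Equiv.sumCongr_apply]
    · have h1 := pr1 (.inr v)
      rw [show (Sum.map id (⇑φV1) (.inr v) : Sum (Fin n) G₁'.V)
          = .inr (φV1 v) from rfl] at h1
      rcases hp : G₁.prnt (.inr v) with w | j
      · rw [hp] at h1
        simp [comp, compPrnt, hp, h1, Equiv.sumCongr_apply]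
      · rw [hp] at h1
        have h2 := pr2 (.inl j)
        rw [show (Sum.map id (⇑φV2) (.inl j) : Sum (Fin m) G₂'.V) = .inl j from rfl] at h2
        rcases hq : G₂.prnt (.inl j) with w' | r <;> rw [hq] at h2 <;>
          simp [comp, compPrnt, hp, hq, h1, h2, Equiv.sumCongr_apply]
    · have h2 := pr2 (.inr v)
      rw [show (Sum.map id (⇑φV2) (.inr v) : Sum (Fin m) G₂'.V)
          = .inr (φV2 v) from rfl] at h2
      rcases hq : G₂.prnt (.inr v) with w' | r <;> rw [hq] at h2 <;>
        simp [comp, compPrnt, hq, h2, Equiv.sumCongr_apply]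
  · -- link
    intro q
    rcases point_cases G₁ G₂ q with ⟨p, rfl⟩ | ⟨p, rfl⟩
    · -- points coming from G₁
      have hqmap : Sum.map (Sum.map (⇑(φB1.sumCongr φB2)) (⇑(φF1.sumCongr φF2))) id
          (emb1 G₁ G₂ p) = emb1 G₁' G₂' (Sum.map (Sum.map φB1 φF1) id p) := by
        rcases p with (b | f) | x <;> rfl
      constructor
      · intro z hz
        have hz2 : chase G₁ G₂ (G₁.link p) = .inr z :=
          (link_emb1 G₁ G₂ p).symm.trans hz
        erw [hqmap]; rw [link_emb1 G₁' G₂']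
        rcases hl : G₁.link p with e₁ | y
        · rw [hl] at hz2; simp [chase] at hz2
        · rw [hl] at hz2
          simp only [chase] at hz2
          rcases hy : G₂.link (.inr y) with e₂ | z'
          · rw [hy] at hz2; simp [pushSnd] at hz2
          · rw [hy] at hz2
            simp only [pushSnd, Sum.inr.injEq] at hz2
            have hy' := (l2 (.inr y)).1 z' hy
            rw [show (Sum.map (Sum.map (⇑φB2) (⇑φF2)) id (.inr y) : G₂'.Point)
                = .inr y from rfl] at hy'
            rw [(l1 p).1 y hl]
            simp only [chase]
            rw [hy', hz2]
            rfl
      · intro e he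
        have he2 : chase G₁ G₂ (G₁.link p) = .inl e :=
          (link_emb1 G₁ G₂ p).symm.trans he
        erw [hqmap]; rw [link_emb1 G₁' G₂']
        rcases hl : G₁.link p with e₁ | y
        · rw [hl] at he2
          simp only [chase, Sum.inl.injEq] at he2
          replace he2 := Sum.inl.inj he2; subst he2
          rw [(l1 p).2 e₁ hl]
          rfl
        · rw [hl] at he2
          simp only [chase] at he2
          rcases hy : G₂.link (.inr y) with e₂ | z'
          · rw [hy] at he2
            simp only [pushSnd, Sum.inl.injEq] at he2
            replace he2 := Sum.inl.inj he2; subst he2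
            have hy' := (l2 (.inr y)).2 e₂ hy
            rw [show (Sum.map (Sum.map (⇑φB2) (⇑φF2)) id (.inr y) : G₂'.Point)
                = .inr y from rfl] at hy'
            rw [(l1 p).1 y hl]
            simp only [chase]
            rw [hy']
            rfl
          · rw [hy] at he2
            simp [pushSnd] at he2
    · -- ports of G₂
      have hqmap : Sum.map (Sum.map (⇑(φB1.sumCongr φB2)) (⇑(φF1.sumCongr φF2))) id
          (emb2 G₁ G₂ p) = emb2 G₁' G₂' (Sum.map φB2 φF2 p) := by
        rcases p with b | f <;> rfl
      constructor
      · intro z hz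
        have hz2 : pushSnd G₁ G₂ (G₂.link (.inl p)) = .inr z :=
          (link_emb2 G₁ G₂ p).symm.trans hz
        erw [hqmap]; rw [link_emb2 G₁' G₂']
        rcases hl : G₂.link (.inl p) with e₂ | z'
        · rw [hl] at hz2; simp [pushSnd] at hz2
        · rw [hl] at hz2
          simp only [pushSnd, Sum.inr.injEq] at hz2
          have hl' := (l2 (.inl p)).1 z' hl
          rw [show (Sum.map (Sum.map (⇑φB2) (⇑φF2)) id (.inl p) : G₂'.Point)
              = .inl (Sum.map φB2 φF2 p) from rfl] at hl'
          rw [hl', hz2]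
          rfl
      · intro e he
        have he2 : pushSnd G₁ G₂ (G₂.link (.inl p)) = .inl e :=
          (link_emb2 G₁ G₂ p).symm.trans he
        erw [hqmap]; rw [link_emb2 G₁' G₂']
        rcases hl : G₂.link (.inl p) with e₂ | z'
        · rw [hl] at he2
          simp only [pushSnd, Sum.inl.injEq] at he2
          replace he2 := Sum.inl.inj he2; subst he2
          have hl' := (l2 (.inl p)).2 e₂ hl
          rw [show (Sum.map (Sum.map (⇑φB2) (⇑φF2)) id (.inl p) : G₂'.Point)
              = .inl (Sum.map φB2 φF2 p) from rfl] at hl'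
          rw [hl']
          rfl
        · rw [hl] at he2
          simp [pushSnd] at he2

end Bigraphs
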